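/- Let π0 = (01234), π1 = (01432), π2 = (03241), π3 = (04231), cyclic permutations of {0,1,2,3,4}. Then there do NOT exist cyclic permutations γ0, γ1, γ2, γ3, γ4 of the 4-element set {a0,a1,a2,a3}, together with antiroutes P_{ij} from πi to πj for all 0 ≤ i < j ≤ 3 with |P_{01}| = |P_{12}| = |P_{23}| = |P_{03}| = 1 and |P_{02}| = |P_{13}| = 2, such that for every pair k ≠ ℓ in {0,1,2,3,4} the set Q_{kℓ} := { (a_i a_j) : 0 ≤ i < j ≤ 3 and the transposition (k ℓ) belongs to P_{ij} } is an antiroute from γk to γℓ. -/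

import Mathlib

/-- The cyclic permutation `(a b c d e)` of `Fin 5`, sending `a ↦ b ↦ c ↦ d ↦ e ↦ a`. -/
def cyc5 (a b c d e : Fin 5) : Equiv.Perm (Fin 5) :=
  Equiv.swap a e * Equiv.swap a d * Equiv.swap a c * Equiv.swap a b

/-- A permutation is *cyclic* if it consists of a single cycle through all elements. -/
def IsCyclicPerm {α : Type*} [Fintype α] [DecidableEq α] (σ : Equiv.Perm α) : Prop :=
  σ.IsCycle ∧ σ.support = Finset.univ

/-- `RouteList γ L κ` holds when successively applying the transpositions in the list `L`
(each, at the moment it is applied, being a swap of two symbols adjacent in the current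
cyclic permutation, and acting by conjugation, i.e. by interchanging the two symbols)
transforms `γ` into `κ`. -/
def RouteList {α : Type*} [DecidableEq α] :
    Equiv.Perm α → List (Equiv.Perm α) → Equiv.Perm α → Prop
  | γ, [], κ => γ = κ
  | γ, τ :: L, κ => ∃ x y, x ≠ y ∧ τ = Equiv.swap x y ∧ (γ x = y ∨ γ y = x) ∧
      RouteList (τ * γ * τ) L κ

/-- `P` is a *route* from `γ` to `κ`: a set of pairwise distinct transpositions that can be
ordered into a sequence whose successive application transforms `γ` into `κ`. -/
def IsRoute {α : Type*} [Fintype α] [DecidableEq α] (γ κ : Equiv.Perm α)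
    (P : Finset (Equiv.Perm α)) : Prop :=
  ∃ L : List (Equiv.Perm α), L.Nodup ∧ L.toFinset = P ∧ RouteList γ L κ

/-- `P` is an *antiroute* from `γ` to `κ`: a route from `γ` to the reverse `κ⁻¹` of `κ`. -/
def IsAntiroute {α : Type*} [Fintype α] [DecidableEq α] (γ κ : Equiv.Perm α)
    (P : Finset (Equiv.Perm α)) : Prop :=
  IsRoute γ κ⁻¹ P


/-- Given sets `P i j` of transpositions of `{0,1,2,3,4}` for pairs of indices `i < j` in
`Fin 4`, the set `Q_{kℓ}` consists of the transpositions `(a_i a_j)` (for `i < j`)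
such that the transposition `(k ℓ)` belongs to `P i j`. -/
def Qset (P : Fin 4 → Fin 4 → Finset (Equiv.Perm (Fin 5))) (k l : Fin 5) :
    Finset (Equiv.Perm (Fin 4)) :=
  ((Finset.univ : Finset (Fin 4 × Fin 4)).filter
      (fun p => p.1 < p.2 ∧ Equiv.swap k l ∈ P p.1 p.2)).image
    (fun p => Equiv.swap p.1 p.2)

/-- The rotations `π0 = (01234)`, `π1 = (01432)`, `π2 = (03241)`, `π3 = (04231)`. -/
def pis : Fin 4 → Equiv.Perm (Fin 5) :=
  ![cyc5 0 1 2 3 4, cyc5 0 1 4 3 2, cyc5 0 3 2 4 1, cyc5 0 4 2 3 1]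

/-! ## Auxiliary machinery -/

section Aux

variable {α : Type*} [Fintype α] [DecidableEq α]

instance instDecRouteList :
    ∀ (L : List (Equiv.Perm α)) (γ κ : Equiv.Perm α), Decidable (RouteList γ L κ)
  | [], γ, κ => decidable_of_iff (γ = κ) Iff.rfl
  | τ :: L, γ, κ =>
    haveI : ∀ _x _y : α, Decidable (RouteList (τ * γ * τ) L κ) :=
      fun _ _ => instDecRouteList L _ _
    decidable_of_iff (∃ x y, x ≠ y ∧ τ = Equiv.swap x y ∧ (γ x = y ∨ γ y = x) ∧
      RouteList (τ * γ * τ) L κ) Iff.rfl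

lemma isRoute_empty_elim {γ κ : Equiv.Perm α} (h : IsRoute γ κ ∅) : γ = κ := by
  obtain ⟨L, -, hF, hR⟩ := h
  rw [List.toFinset_eq_empty_iff] at hF
  subst hF
  exact hR

lemma isRoute_singleton_elim {γ κ a : Equiv.Perm α} (h : IsRoute γ κ {a}) :
    RouteList γ [a] κ := by
  obtain ⟨L, hnd, hF, hR⟩ := h
  have hlen : L.length = 1 := by
    have := List.toFinset_card_of_nodup hnd
    rw [hF] at this
    simpa using this.symm
  obtain ⟨b, rfl⟩ := List.length_eq_one_iff.mp hlen
  obtain rfl : b = a := by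
    have : b ∈ ({a} : Finset (Equiv.Perm α)) := by rw [← hF]; simp
    simpa using this
  exact hR

lemma isRoute_pair_elim {γ κ a b : Equiv.Perm α} (hab : a ≠ b)
    (h : IsRoute γ κ {a, b}) : RouteList γ [a, b] κ ∨ RouteList γ [b, a] κ := by
  obtain ⟨L, hnd, hF, hR⟩ := h
  have hlen : L.length = 2 := by
    have := List.toFinset_card_of_nodup hnd
    rw [hF, Finset.card_insert_of_notMem (by simpa using hab),
      Finset.card_singleton] at this
    omega
  obtain ⟨c, d, rfl⟩ := List.length_eq_two.mp hlen
  have hc : c ∈ ({a, b} : Finset (Equiv.Perm α)) := by rw [← hF]; simp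
  have hd : d ∈ ({a, b} : Finset (Equiv.Perm α)) := by rw [← hF]; simp
  have hcd : c ≠ d := by
    have := (List.nodup_cons.mp hnd).1
    simpa using this
  simp only [Finset.mem_insert, Finset.mem_singleton] at hc hd
  rcases hc with rfl | rfl <;> rcases hd with rfl | rfl
  · exact absurd rfl hcd
  · exact Or.inl hR
  · exact Or.inr hR
  · exact absurd rfl hcd

end Aux

lemma Qset_congr {P P' : Fin 4 → Fin 4 → Finset (Equiv.Perm (Fin 5))}
    (h : ∀ i j : Fin 4, i < j → P i j = P' i j) (k l : Fin 5) :
    Qset P k l = Qset P' k l := by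
  unfold Qset
  congr 1
  apply Finset.filter_congr
  intro p _
  by_cases hp : p.1 < p.2
  · simp [hp, h _ _ hp]
  · simp [hp]

lemma Qset_symm (P : Fin 4 → Fin 4 → Finset (Equiv.Perm (Fin 5))) (k l : Fin 5) :
    Qset P k l = Qset P l k := by
  unfold Qset
  simp only [Equiv.swap_comm k l]

/-! ## Classification of the small antiroutes between the rotations -/

lemma key01 : ∀ x y : Fin 5, x ≠ y → (pis 0 x = y ∨ pis 0 y = x) →
    Equiv.swap x y * pis 0 * Equiv.swap x y = (pis 1)⁻¹ →
    Equiv.swap x y = Equiv.swap 0 1 := by decide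

lemma key12 : ∀ x y : Fin 5, x ≠ y → (pis 1 x = y ∨ pis 1 y = x) →
    Equiv.swap x y * pis 1 * Equiv.swap x y = (pis 2)⁻¹ →
    Equiv.swap x y = Equiv.swap 2 3 := by decide

lemma key23 : ∀ x y : Fin 5, x ≠ y → (pis 2 x = y ∨ pis 2 y = x) →
    Equiv.swap x y * pis 2 * Equiv.swap x y = (pis 3)⁻¹ →
    Equiv.swap x y = Equiv.swap 0 1 := by decide

lemma key03 : ∀ x y : Fin 5, x ≠ y → (pis 0 x = y ∨ pis 0 y = x) →
    Equiv.swap x y * pis 0 * Equiv.swap x y = (pis 3)⁻¹ →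
    Equiv.swap x y = Equiv.swap 2 3 := by decide

/-- The two possible size-2 antiroutes from `π0` to `π2`. -/
def SA : Finset (Equiv.Perm (Fin 5)) := {Equiv.swap 2 4, Equiv.swap 3 4}
def SB : Finset (Equiv.Perm (Fin 5)) := {Equiv.swap 0 4, Equiv.swap 1 4}

lemma key02 : ∀ x y z w : Fin 5, x ≠ y → z ≠ w →
    (pis 0 x = y ∨ pis 0 y = x) →
    ((Equiv.swap x y * pis 0 * Equiv.swap x y) z = w ∨
     (Equiv.swap x y * pis 0 * Equiv.swap x y) w = z) →
    Equiv.swap z w * (Equiv.swap x y * pis 0 * Equiv.swap x y) * Equiv.swap z w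
      = (pis 2)⁻¹ →
    (({Equiv.swap x y, Equiv.swap z w} : Finset (Equiv.Perm (Fin 5))) = SA ∨
     ({Equiv.swap x y, Equiv.swap z w} : Finset (Equiv.Perm (Fin 5))) = SB) := by decide

lemma key13 : ∀ x y z w : Fin 5, x ≠ y → z ≠ w →
    (pis 1 x = y ∨ pis 1 y = x) →
    ((Equiv.swap x y * pis 1 * Equiv.swap x y) z = w ∨
     (Equiv.swap x y * pis 1 * Equiv.swap x y) w = z) →
    Equiv.swap z w * (Equiv.swap x y * pis 1 * Equiv.swap x y) * Equiv.swap z w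
      = (pis 3)⁻¹ →
    (({Equiv.swap x y, Equiv.swap z w} : Finset (Equiv.Perm (Fin 5))) = SA ∨
     ({Equiv.swap x y, Equiv.swap z w} : Finset (Equiv.Perm (Fin 5))) = SB) := by decide

/-! ## The explicit candidate matrices of transposition sets -/

def Pm (S T : Finset (Equiv.Perm (Fin 5))) :
    Fin 4 → Fin 4 → Finset (Equiv.Perm (Fin 5)) :=
  ![![∅, {Equiv.swap 0 1}, S, {Equiv.swap 2 3}],
    ![∅, ∅, {Equiv.swap 2 3}, T],
    ![∅, ∅, ∅, {Equiv.swap 0 1}],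
    ![∅, ∅, ∅, ∅]]

lemma Pm_spec {P : Fin 4 → Fin 4 → Finset (Equiv.Perm (Fin 5))}
    {S T : Finset (Equiv.Perm (Fin 5))}
    (h01 : P 0 1 = {Equiv.swap 0 1}) (h12 : P 1 2 = {Equiv.swap 2 3})
    (h23 : P 2 3 = {Equiv.swap 0 1}) (h03 : P 0 3 = {Equiv.swap 2 3})
    (h02 : P 0 2 = S) (h13 : P 1 3 = T) :
    ∀ i j : Fin 4, i < j → P i j = Pm S T i j := by
  intro i j hij
  fin_cases i <;> fin_cases j <;>
    first
      | exact absurd hij (by decide)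
      | exact h01 | exact h12 | exact h23 | exact h03 | exact h02 | exact h13

/-! ## Final nonexistence lemmas for the `γ`'s -/

abbrev R2 (g k a b : Equiv.Perm (Fin 4)) : Prop :=
  RouteList g [a, b] k ∨ RouteList g [b, a] k

lemma comboAA : ∀ g : Equiv.Perm (Fin 4),
    ¬ (R2 g g⁻¹ (Equiv.swap 0 1) (Equiv.swap 2 3) ∧
       R2 g⁻¹ g (Equiv.swap 0 3) (Equiv.swap 1 2) ∧
       R2 g⁻¹ g (Equiv.swap 0 2) (Equiv.swap 1 3)) := by decide

lemma comboBB : ∀ g : Equiv.Perm (Fin 4),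
    ¬ (R2 g g⁻¹ (Equiv.swap 0 1) (Equiv.swap 2 3) ∧
       R2 g⁻¹ g (Equiv.swap 0 3) (Equiv.swap 1 2) ∧
       R2 g g⁻¹ (Equiv.swap 0 2) (Equiv.swap 1 3)) := by decide

set_option maxRecDepth 100000 in
lemma comboAB : ∀ g h : Equiv.Perm (Fin 4),
    ¬ (R2 g g⁻¹ (Equiv.swap 0 1) (Equiv.swap 2 3) ∧
       R2 g⁻¹ g (Equiv.swap 0 3) (Equiv.swap 1 2) ∧
       RouteList g [Equiv.swap 1 3] h⁻¹ ∧ RouteList h [Equiv.swap 1 3] g⁻¹ ∧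
       RouteList g⁻¹ [Equiv.swap 0 2] h⁻¹ ∧ RouteList h [Equiv.swap 0 2] g) := by decide

set_option maxRecDepth 100000 in
lemma comboBA : ∀ g h : Equiv.Perm (Fin 4),
    ¬ (R2 g g⁻¹ (Equiv.swap 0 1) (Equiv.swap 2 3) ∧
       R2 g⁻¹ g (Equiv.swap 0 3) (Equiv.swap 1 2) ∧
       RouteList g [Equiv.swap 0 2] h⁻¹ ∧ RouteList h [Equiv.swap 0 2] g⁻¹ ∧
       RouteList g⁻¹ [Equiv.swap 1 3] h⁻¹ ∧ RouteList h [Equiv.swap 1 3] g) := by decide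

/-! ## The four branches -/

lemma caseAA (γ : Fin 5 → Equiv.Perm (Fin 4))
    (P : Fin 4 → Fin 4 → Finset (Equiv.Perm (Fin 5)))
    (hPm : ∀ i j : Fin 4, i < j → P i j = Pm SA SA i j)
    (hQ : ∀ k l : Fin 5, k ≠ l → IsAntiroute (γ k) (γ l) (Qset P k l)) : False := by
  have q := Qset_congr hPm
  have e02 : γ 0 = (γ 2)⁻¹ := by
    have h := hQ 0 2 (by decide)
    rw [q 0 2, show Qset (Pm SA SA) 0 2 = ∅ from by decide] at h
    exact isRoute_empty_elim h
  have e03 : γ 0 = (γ 3)⁻¹ := by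
    have h := hQ 0 3 (by decide)
    rw [q 0 3, show Qset (Pm SA SA) 0 3 = ∅ from by decide] at h
    exact isRoute_empty_elim h
  have e12 : γ 1 = (γ 2)⁻¹ := by
    have h := hQ 1 2 (by decide)
    rw [q 1 2, show Qset (Pm SA SA) 1 2 = ∅ from by decide] at h
    exact isRoute_empty_elim h
  have e04 : γ 0 = (γ 4)⁻¹ := by
    have h := hQ 0 4 (by decide)
    rw [q 0 4, show Qset (Pm SA SA) 0 4 = ∅ from by decide] at h
    exact isRoute_empty_elim h
  have hg1 : γ 1 = γ 0 := e12.trans e02.symm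
  have hg2 : γ 2 = (γ 0)⁻¹ := by rw [e02, inv_inv]
  have hg3 : γ 3 = (γ 0)⁻¹ := by rw [e03, inv_inv]
  have hg4 : γ 4 = (γ 0)⁻¹ := by rw [e04, inv_inv]
  have c1 : R2 (γ 0) (γ 0)⁻¹ (Equiv.swap 0 1) (Equiv.swap 2 3) := by
    have h := hQ 0 1 (by decide)
    rw [q 0 1, show Qset (Pm SA SA) 0 1 = {Equiv.swap 0 1, Equiv.swap 2 3}
      from by decide, hg1] at h
    exact isRoute_pair_elim (by decide) h
  have c2 : R2 (γ 0)⁻¹ (γ 0) (Equiv.swap 0 3) (Equiv.swap 1 2) := by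
    have h := hQ 2 3 (by decide)
    rw [q 2 3, show Qset (Pm SA SA) 2 3 = {Equiv.swap 0 3, Equiv.swap 1 2}
      from by decide, hg2, hg3] at h
    have h' := isRoute_pair_elim (by decide) h
    rwa [inv_inv] at h'
  have c3 : R2 (γ 0)⁻¹ (γ 0) (Equiv.swap 0 2) (Equiv.swap 1 3) := by
    have h := hQ 2 4 (by decide)
    rw [q 2 4, show Qset (Pm SA SA) 2 4 = {Equiv.swap 0 2, Equiv.swap 1 3}
      from by decide, hg2, hg4] at h
    have h' := isRoute_pair_elim (by decide) h
    rwa [inv_inv] at h'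
  exact comboAA (γ 0) ⟨c1, c2, c3⟩

lemma caseBB (γ : Fin 5 → Equiv.Perm (Fin 4))
    (P : Fin 4 → Fin 4 → Finset (Equiv.Perm (Fin 5)))
    (hPm : ∀ i j : Fin 4, i < j → P i j = Pm SB SB i j)
    (hQ : ∀ k l : Fin 5, k ≠ l → IsAntiroute (γ k) (γ l) (Qset P k l)) : False := by
  have q := Qset_congr hPm
  have e02 : γ 0 = (γ 2)⁻¹ := by
    have h := hQ 0 2 (by decide)
    rw [q 0 2, show Qset (Pm SB SB) 0 2 = ∅ from by decide] at h
    exact isRoute_empty_elim h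
  have e03 : γ 0 = (γ 3)⁻¹ := by
    have h := hQ 0 3 (by decide)
    rw [q 0 3, show Qset (Pm SB SB) 0 3 = ∅ from by decide] at h
    exact isRoute_empty_elim h
  have e12 : γ 1 = (γ 2)⁻¹ := by
    have h := hQ 1 2 (by decide)
    rw [q 1 2, show Qset (Pm SB SB) 1 2 = ∅ from by decide] at h
    exact isRoute_empty_elim h
  have e24 : γ 2 = (γ 4)⁻¹ := by
    have h := hQ 2 4 (by decide)
    rw [q 2 4, show Qset (Pm SB SB) 2 4 = ∅ from by decide] at h
    exact isRoute_empty_elim h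
  have hg1 : γ 1 = γ 0 := e12.trans e02.symm
  have hg2 : γ 2 = (γ 0)⁻¹ := by rw [e02, inv_inv]
  have hg3 : γ 3 = (γ 0)⁻¹ := by rw [e03, inv_inv]
  have hg4 : γ 4 = γ 0 := by
    have : (γ 0)⁻¹ = (γ 4)⁻¹ := hg2 ▸ e24
    exact inv_injective this.symm
  have c1 : R2 (γ 0) (γ 0)⁻¹ (Equiv.swap 0 1) (Equiv.swap 2 3) := by
    have h := hQ 0 1 (by decide)
    rw [q 0 1, show Qset (Pm SB SB) 0 1 = {Equiv.swap 0 1, Equiv.swap 2 3}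
      from by decide, hg1] at h
    exact isRoute_pair_elim (by decide) h
  have c2 : R2 (γ 0)⁻¹ (γ 0) (Equiv.swap 0 3) (Equiv.swap 1 2) := by
    have h := hQ 2 3 (by decide)
    rw [q 2 3, show Qset (Pm SB SB) 2 3 = {Equiv.swap 0 3, Equiv.swap 1 2}
      from by decide, hg2, hg3] at h
    have h' := isRoute_pair_elim (by decide) h
    rwa [inv_inv] at h'
  have c3 : R2 (γ 0) (γ 0)⁻¹ (Equiv.swap 0 2) (Equiv.swap 1 3) := by
    have h := hQ 0 4 (by decide)
    rw [q 0 4, show Qset (Pm SB SB) 0 4 = {Equiv.swap 0 2, Equiv.swap 1 3}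
      from by decide, hg4] at h
    exact isRoute_pair_elim (by decide) h
  exact comboBB (γ 0) ⟨c1, c2, c3⟩

lemma caseAB (γ : Fin 5 → Equiv.Perm (Fin 4))
    (P : Fin 4 → Fin 4 → Finset (Equiv.Perm (Fin 5)))
    (hPm : ∀ i j : Fin 4, i < j → P i j = Pm SA SB i j)
    (hQ : ∀ k l : Fin 5, k ≠ l → IsAntiroute (γ k) (γ l) (Qset P k l)) : False := by
  have q := Qset_congr hPm
  have e02 : γ 0 = (γ 2)⁻¹ := by
    have h := hQ 0 2 (by decide)
    rw [q 0 2, show Qset (Pm SA SB) 0 2 = ∅ from by decide] at h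
    exact isRoute_empty_elim h
  have e03 : γ 0 = (γ 3)⁻¹ := by
    have h := hQ 0 3 (by decide)
    rw [q 0 3, show Qset (Pm SA SB) 0 3 = ∅ from by decide] at h
    exact isRoute_empty_elim h
  have e12 : γ 1 = (γ 2)⁻¹ := by
    have h := hQ 1 2 (by decide)
    rw [q 1 2, show Qset (Pm SA SB) 1 2 = ∅ from by decide] at h
    exact isRoute_empty_elim h
  have hg1 : γ 1 = γ 0 := e12.trans e02.symm
  have hg2 : γ 2 = (γ 0)⁻¹ := by rw [e02, inv_inv]
  have hg3 : γ 3 = (γ 0)⁻¹ := by rw [e03, inv_inv]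
  have c1 : R2 (γ 0) (γ 0)⁻¹ (Equiv.swap 0 1) (Equiv.swap 2 3) := by
    have h := hQ 0 1 (by decide)
    rw [q 0 1, show Qset (Pm SA SB) 0 1 = {Equiv.swap 0 1, Equiv.swap 2 3}
      from by decide, hg1] at h
    exact isRoute_pair_elim (by decide) h
  have c2 : R2 (γ 0)⁻¹ (γ 0) (Equiv.swap 0 3) (Equiv.swap 1 2) := by
    have h := hQ 2 3 (by decide)
    rw [q 2 3, show Qset (Pm SA SB) 2 3 = {Equiv.swap 0 3, Equiv.swap 1 2}
      from by decide, hg2, hg3] at h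
    have h' := isRoute_pair_elim (by decide) h
    rwa [inv_inv] at h'
  have d1 : RouteList (γ 0) [Equiv.swap 1 3] (γ 4)⁻¹ := by
    have h := hQ 0 4 (by decide)
    rw [q 0 4, show Qset (Pm SA SB) 0 4 = {Equiv.swap 1 3} from by decide] at h
    exact isRoute_singleton_elim h
  have d2 : RouteList (γ 4) [Equiv.swap 1 3] (γ 0)⁻¹ := by
    have h := hQ 4 0 (by decide)
    rw [Qset_symm P 4 0, q 0 4,
      show Qset (Pm SA SB) 0 4 = {Equiv.swap 1 3} from by decide] at h
    exact isRoute_singleton_elim h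
  have d3 : RouteList (γ 0)⁻¹ [Equiv.swap 0 2] (γ 4)⁻¹ := by
    have h := hQ 2 4 (by decide)
    rw [q 2 4, show Qset (Pm SA SB) 2 4 = {Equiv.swap 0 2} from by decide, hg2] at h
    exact isRoute_singleton_elim h
  have d4 : RouteList (γ 4) [Equiv.swap 0 2] (γ 0) := by
    have h := hQ 4 2 (by decide)
    rw [Qset_symm P 4 2, q 2 4,
      show Qset (Pm SA SB) 2 4 = {Equiv.swap 0 2} from by decide, hg2] at h
    have h' := isRoute_singleton_elim h
    rwa [inv_inv] at h'
  exact comboAB (γ 0) (γ 4) ⟨c1, c2, d1, d2, d3, d4⟩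

lemma caseBA (γ : Fin 5 → Equiv.Perm (Fin 4))
    (P : Fin 4 → Fin 4 → Finset (Equiv.Perm (Fin 5)))
    (hPm : ∀ i j : Fin 4, i < j → P i j = Pm SB SA i j)
    (hQ : ∀ k l : Fin 5, k ≠ l → IsAntiroute (γ k) (γ l) (Qset P k l)) : False := by
  have q := Qset_congr hPm
  have e02 : γ 0 = (γ 2)⁻¹ := by
    have h := hQ 0 2 (by decide)
    rw [q 0 2, show Qset (Pm SB SA) 0 2 = ∅ from by decide] at h
    exact isRoute_empty_elim h
  have e03 : γ 0 = (γ 3)⁻¹ := by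
    have h := hQ 0 3 (by decide)
    rw [q 0 3, show Qset (Pm SB SA) 0 3 = ∅ from by decide] at h
    exact isRoute_empty_elim h
  have e12 : γ 1 = (γ 2)⁻¹ := by
    have h := hQ 1 2 (by decide)
    rw [q 1 2, show Qset (Pm SB SA) 1 2 = ∅ from by decide] at h
    exact isRoute_empty_elim h
  have hg1 : γ 1 = γ 0 := e12.trans e02.symm
  have hg2 : γ 2 = (γ 0)⁻¹ := by rw [e02, inv_inv]
  have hg3 : γ 3 = (γ 0)⁻¹ := by rw [e03, inv_inv]
  have c1 : R2 (γ 0) (γ 0)⁻¹ (Equiv.swap 0 1) (Equiv.swap 2 3) := by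
    have h := hQ 0 1 (by decide)
    rw [q 0 1, show Qset (Pm SB SA) 0 1 = {Equiv.swap 0 1, Equiv.swap 2 3}
      from by decide, hg1] at h
    exact isRoute_pair_elim (by decide) h
  have c2 : R2 (γ 0)⁻¹ (γ 0) (Equiv.swap 0 3) (Equiv.swap 1 2) := by
    have h := hQ 2 3 (by decide)
    rw [q 2 3, show Qset (Pm SB SA) 2 3 = {Equiv.swap 0 3, Equiv.swap 1 2}
      from by decide, hg2, hg3] at h
    have h' := isRoute_pair_elim (by decide) h
    rwa [inv_inv] at h'
  have d1 : RouteList (γ 0) [Equiv.swap 0 2] (γ 4)⁻¹ := by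
    have h := hQ 0 4 (by decide)
    rw [q 0 4, show Qset (Pm SB SA) 0 4 = {Equiv.swap 0 2} from by decide] at h
    exact isRoute_singleton_elim h
  have d2 : RouteList (γ 4) [Equiv.swap 0 2] (γ 0)⁻¹ := by
    have h := hQ 4 0 (by decide)
    rw [Qset_symm P 4 0, q 0 4,
      show Qset (Pm SB SA) 0 4 = {Equiv.swap 0 2} from by decide] at h
    exact isRoute_singleton_elim h
  have d3 : RouteList (γ 0)⁻¹ [Equiv.swap 1 3] (γ 4)⁻¹ := by
    have h := hQ 2 4 (by decide)
    rw [q 2 4, show Qset (Pm SB SA) 2 4 = {Equiv.swap 1 3} from by decide, hg2] at h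
    exact isRoute_singleton_elim h
  have d4 : RouteList (γ 4) [Equiv.swap 1 3] (γ 0) := by
    have h := hQ 4 2 (by decide)
    rw [Qset_symm P 4 2, q 2 4,
      show Qset (Pm SB SA) 2 4 = {Equiv.swap 1 3} from by decide, hg2] at h
    have h' := isRoute_singleton_elim h
    rwa [inv_inv] at h'
  exact comboBA (γ 0) (γ 4) ⟨c1, c2, d1, d2, d3, d4⟩

/-- There do not exist cyclic permutations `γ0, …, γ4` of a 4-element set, together with
antiroutes `P i j` from `π i` to `π j` with `|P 0 1| = |P 1 2| = |P 2 3| = |P 0 3| = 1` and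
`|P 0 2| = |P 1 3| = 2`, such that for all `k ≠ ℓ` the set `Q_{kℓ}` is an antiroute from
`γ k` to `γ ℓ`. -/
theorem no_key_cycle_configuration :
    ¬ ∃ (γ : Fin 5 → Equiv.Perm (Fin 4))
        (P : Fin 4 → Fin 4 → Finset (Equiv.Perm (Fin 5))),
      (∀ k, IsCyclicPerm (γ k)) ∧
      (∀ i j : Fin 4, i < j → IsAntiroute (pis i) (pis j) (P i j)) ∧
      (P 0 1).card = 1 ∧ (P 1 2).card = 1 ∧ (P 2 3).card = 1 ∧ (P 0 3).card = 1 ∧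
      (P 0 2).card = 2 ∧ (P 1 3).card = 2 ∧
      (∀ k l : Fin 5, k ≠ l → IsAntiroute (γ k) (γ l) (Qset P k l)) := by
  rintro ⟨γ, P, -, hanti, c01, c12, c23, c03, c02, c13, hQ⟩
  -- pin down the four singleton sets
  obtain ⟨τ1, hP01⟩ := Finset.card_eq_one.mp c01
  have h01 := hanti 0 1 (by decide)
  rw [hP01] at h01
  obtain ⟨x, y, hxy, rfl, hadj, heq⟩ := isRoute_singleton_elim h01
  rw [key01 x y hxy hadj heq] at hP01
  obtain ⟨τ2, hP12⟩ := Finset.card_eq_one.mp c12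
  have h12' := hanti 1 2 (by decide)
  rw [hP12] at h12'
  obtain ⟨x, y, hxy, rfl, hadj, heq⟩ := isRoute_singleton_elim h12'
  rw [key12 x y hxy hadj heq] at hP12
  obtain ⟨τ3, hP23⟩ := Finset.card_eq_one.mp c23
  have h23' := hanti 2 3 (by decide)
  rw [hP23] at h23'
  obtain ⟨x, y, hxy, rfl, hadj, heq⟩ := isRoute_singleton_elim h23'
  rw [key23 x y hxy hadj heq] at hP23
  obtain ⟨τ4, hP03⟩ := Finset.card_eq_one.mp c03
  have h03' := hanti 0 3 (by decide)
  rw [hP03] at h03'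
  obtain ⟨x, y, hxy, rfl, hadj, heq⟩ := isRoute_singleton_elim h03'
  rw [key03 x y hxy hadj heq] at hP03
  -- pin down the two 2-element sets
  obtain ⟨a, b, hab, hP02⟩ := Finset.card_eq_two.mp c02
  have h02' := hanti 0 2 (by decide)
  rw [hP02] at h02'
  have hP02' : P 0 2 = SA ∨ P 0 2 = SB := by
    rcases isRoute_pair_elim hab h02' with hR | hR
    · obtain ⟨x, y, hxy, rfl, h1, hR⟩ := hR
      obtain ⟨z, w, hzw, rfl, h2, heq⟩ := hR
      rw [hP02]
      exact key02 x y z w hxy hzw h1 h2 heq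
    · obtain ⟨x, y, hxy, rfl, h1, hR⟩ := hR
      obtain ⟨z, w, hzw, rfl, h2, heq⟩ := hR
      rw [hP02, Finset.pair_comm]
      exact key02 x y z w hxy hzw h1 h2 heq
  obtain ⟨a', b', hab', hP13⟩ := Finset.card_eq_two.mp c13
  have h13' := hanti 1 3 (by decide)
  rw [hP13] at h13'
  have hP13' : P 1 3 = SA ∨ P 1 3 = SB := by
    rcases isRoute_pair_elim hab' h13' with hR | hR
    · obtain ⟨x, y, hxy, rfl, h1, hR⟩ := hR
      obtain ⟨z, w, hzw, rfl, h2, heq⟩ := hR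
      rw [hP13]
      exact key13 x y z w hxy hzw h1 h2 heq
    · obtain ⟨x, y, hxy, rfl, h1, hR⟩ := hR
      obtain ⟨z, w, hzw, rfl, h2, heq⟩ := hR
      rw [hP13, Finset.pair_comm]
      exact key13 x y z w hxy hzw h1 h2 heq
  rcases hP02' with h02 | h02 <;> rcases hP13' with h13 | h13
  · exact caseAA γ P (Pm_spec hP01 hP12 hP23 hP03 h02 h13) hQ
  · exact caseAB γ P (Pm_spec hP01 hP12 hP23 hP03 h02 h13) hQ
  · exact caseBA γ P (Pm_spec hP01 hP12 hP23 hP03 h02 h13) hQ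
  · exact caseBB γ P (Pm_spec hP01 hP12 hP23 hP03 h02 h13) hQ
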